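/- Let L ∈ S be a non-minimal vertex and I ∈ S_min with I < L. Then Σ_{J ∈ S_min : sup(I, J) = L} μ(J) = μ(L)(1 − p_L⁻¹). -/

import Mathlib

open scoped Classical

section Aux

variable {S : Type*} [Fintype S] [SemilatticeSup S]

/-- Any element strictly below `M` lies below some child of `M`. -/
lemma exists_child_aux {x M : S} (h : x < M) : ∃ c : S, x ≤ c ∧ c ⋖ M := by
  classical
  obtain ⟨c, hc, hmax⟩ : ∃ c ∈ Finset.univ.filter (fun c : S => x ≤ c ∧ c < M),
      ∀ z ∈ Finset.univ.filter (fun c : S => x ≤ c ∧ c < M), ¬ c < z := by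
    obtain ⟨c, hc, hm⟩ := Finset.exists_maximal
      (s := Finset.univ.filter (fun c : S => x ≤ c ∧ c < M)) ⟨x, by simp [h]⟩
    exact ⟨c, hc, fun z hz hlt => lt_irrefl _ (lt_of_lt_of_le hlt (hm hz hlt.le))⟩
  simp only [Finset.mem_filter, Finset.mem_univ, true_and] at hc
  refine ⟨c, hc.1, hc.2, fun z hz1 hz2 => ?_⟩
  exact hmax z (by simp [le_of_lt (lt_trans (lt_of_le_of_lt hc.1 hz1) hz2) |>.trans, hc.1.trans hz1.le, hz2]) hz1

/-- Two children of `M` above a common element coincide. -/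
lemma child_unique_aux
    (hchain : ∀ x y z : S, x ≤ y → x ≤ z → y ≤ z ∨ z ≤ y)
    {x c c' M : S} (hc : c ⋖ M) (hc' : c' ⋖ M) (h1 : x ≤ c) (h2 : x ≤ c') :
    c = c' := by
  rcases hchain x c c' h1 h2 with h | h
  · rcases lt_or_eq_of_le h with h | h
    · exact absurd hc'.1 (hc.2 h)
    · exact h
  · rcases lt_or_eq_of_le h with h | h
    · exact absurd hc.1 (hc'.2 h)
    · exact h.symm

/-- Sum of weights of minimal elements below `M` equals `μ M`. -/
lemma sum_min_le_aux
    (hchain : ∀ x y z : S, x ≤ y → x ≤ z → y ≤ z ∨ z ≤ y)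
    (p : S → ℕ) (hp : ∀ L : S, ¬ IsMin L → 2 ≤ p L)
    (hcard : ∀ L : S, ¬ IsMin L →
      (Finset.univ.filter (fun J : S => J ⋖ L)).card = p L)
    (μ : S → ℝ)
    (hμ : ∀ L J : S, J ⋖ L → μ J = μ L / p L)
    (M : S) :
    ∑ J ∈ Finset.univ.filter (fun J : S => IsMin J ∧ J ≤ M), μ J = μ M := by
  induction M using WellFoundedLT.induction with
  | ind M ih =>
    by_cases hM : IsMin M
    · have : Finset.univ.filter (fun J : S => IsMin J ∧ J ≤ M) = {M} := by
        ext J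
        simp only [Finset.mem_filter, Finset.mem_univ, true_and, Finset.mem_singleton]
        constructor
        · rintro ⟨hJ, hJM⟩
          exact le_antisymm hJM (hM hJM)
        · rintro rfl; exact ⟨hM, le_rfl⟩
      rw [this, Finset.sum_singleton]
    · -- partition over children
      set C : Finset S := Finset.univ.filter (fun c : S => c ⋖ M) with hC
      have hUnion : Finset.univ.filter (fun J : S => IsMin J ∧ J ≤ M)
          = C.biUnion (fun c => Finset.univ.filter (fun J : S => IsMin J ∧ J ≤ c)) := by
        ext J
        simp only [Finset.mem_filter, Finset.mem_univ, true_and, Finset.mem_biUnion, hC]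
        constructor
        · rintro ⟨hJ, hJM⟩
          have hJM' : J < M := lt_of_le_of_ne hJM (by rintro rfl; exact hM hJ)
          obtain ⟨c, h1, h2⟩ := exists_child_aux hJM'
          exact ⟨c, by simp [h2], hJ, h1⟩
        · rintro ⟨c, hc, hJ, hJc⟩
          have hc' : c ⋖ M := by
            have := hc; simpa [hC, Finset.mem_filter] using this
          exact ⟨hJ, hJc.trans hc'.1.le⟩
      have hdisj : ∀ c ∈ C, ∀ c' ∈ C, c ≠ c' →
          Disjoint (Finset.univ.filter (fun J : S => IsMin J ∧ J ≤ c))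
            (Finset.univ.filter (fun J : S => IsMin J ∧ J ≤ c')) := by
        intro c hc c' hc' hne
        rw [hC, Finset.mem_filter] at hc hc'
        replace hc := hc.2
        replace hc' := hc'.2
        refine Finset.disjoint_left.2 ?_
        intro J hJ hJ'
        simp only [Finset.mem_filter, Finset.mem_univ, true_and] at hJ hJ'
        exact hne (child_unique_aux hchain hc hc' hJ.2 hJ'.2)
      rw [hUnion, Finset.sum_biUnion hdisj]
      have hstep : ∀ c ∈ C, ∑ J ∈ Finset.univ.filter (fun J : S => IsMin J ∧ J ≤ c), μ J
          = μ M / p M := by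
        intro c hc
        simp only [hC, Finset.mem_filter, Finset.mem_univ, true_and] at hc
        rw [ih c hc.1, hμ M c hc]
      rw [Finset.sum_congr rfl hstep, Finset.sum_const, hcard M hM, nsmul_eq_mul]
      have hpne : (p M : ℝ) ≠ 0 := by
        have := hp M hM; positivity
      field_simp

end Aux

theorem sum_min_weights_sup_eq
    {S : Type*} [Fintype S] [SemilatticeSup S]
    (K : S) (hK : ∀ x : S, x ≤ K)
    (hchain : ∀ x y z : S, x ≤ y → x ≤ z → y ≤ z ∨ z ≤ y)
    (p : S → ℕ) (hp : ∀ L : S, ¬ IsMin L → 2 ≤ p L)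
    (hcard : ∀ L : S, ¬ IsMin L →
      (Finset.univ.filter (fun J : S => J ⋖ L)).card = p L)
    (μ : S → ℝ) (hμK : 0 < μ K)
    (hμ : ∀ L J : S, J ⋖ L → μ J = μ L / p L)
    (L : S) (hL : ¬ IsMin L) (I : S) (hI : IsMin I) (hIL : I < L) :
    ∑ J ∈ Finset.univ.filter (fun J : S => IsMin J ∧ I ⊔ J = L), μ J =
      μ L * (1 - (p L : ℝ)⁻¹) := by
  classical
  obtain ⟨c₀, hIc₀, hc₀⟩ := exists_child_aux hIL
  set A := Finset.univ.filter (fun J : S => IsMin J ∧ J ≤ L) with hA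
  set B := Finset.univ.filter (fun J : S => IsMin J ∧ J ≤ c₀) with hB
  have hBA : B ⊆ A := by
    intro J hJ
    simp only [hA, hB, Finset.mem_filter, Finset.mem_univ, true_and] at *
    exact ⟨hJ.1, hJ.2.trans hc₀.1.le⟩
  have hset : Finset.univ.filter (fun J : S => IsMin J ∧ I ⊔ J = L) = A \ B := by
    ext J
    simp only [hA, hB, Finset.mem_sdiff, Finset.mem_filter, Finset.mem_univ, true_and,
      not_and]
    constructor
    · rintro ⟨hJ, hsup⟩
      refine ⟨⟨hJ, le_sup_right.trans hsup.le⟩, fun _ hJc₀ => ?_⟩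
      have : I ⊔ J ≤ c₀ := sup_le hIc₀ hJc₀
      exact absurd hsup (by rw [← hsup] at hc₀ ⊢; exact (ne_of_lt (lt_of_le_of_lt this hc₀.1)) )
    · rintro ⟨⟨hJ, hJL⟩, hnc⟩
      refine ⟨hJ, ?_⟩
      have hle : I ⊔ J ≤ L := sup_le hIL.le hJL
      rcases lt_or_eq_of_le hle with hlt | heq
      · obtain ⟨c, h1, h2⟩ := exists_child_aux hlt
        have : c = c₀ := child_unique_aux hchain h2 hc₀ (le_sup_left.trans h1) hIc₀
        exact ((hnc hJ (le_sup_right.trans (this ▸ h1))).elim)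
      · exact heq
  rw [hset, Finset.sum_sdiff_eq_sub hBA]
  rw [sum_min_le_aux hchain p hp hcard μ hμ L]
  have : ∑ J ∈ B, μ J = μ L / p L := by
    rw [hB, sum_min_le_aux hchain p hp hcard μ hμ c₀, hμ L c₀ hc₀]
  rw [this, div_eq_mul_inv]
  ring
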